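/- Let X, Y, W ∈ ℝ[t], define U := X'·W − X·W' and V := Y'·W − Y·W', let d > 0, and let t₀ ∈ ℝ with W(t₀) ≠ 0 and (U(t₀), V(t₀)) ≠ (0,0). Let 𝒳(s) = X(s)/W(s) and 𝒴(s) = Y(s)/W(s) near t₀, and set (x₀, y₀) := (𝒳(t₀), 𝒴(t₀)) + (d/√(𝒳'(t₀)² + 𝒴'(t₀)²))·(𝒴'(t₀), −𝒳'(t₀)) (the exterior offset point generated by t₀). Let p ∈ ℝ[t] be the univariate polynomial p := U·(W·x₀ − X) + V·(W·y₀ − Y). Then p'(t₀) = 0 if and only if (𝒳'(t₀)·𝒴''(t₀) − 𝒳''(t₀)·𝒴'(t₀)) / (𝒳'(t₀)² + 𝒴'(t₀)²)^{3/2} = −1/d, i.e., if and only if the signed curvature of the parametrized curve (𝒳, 𝒴) at t₀ equals −1/d. -/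

import Mathlib

open Polynomial

set_option maxHeartbeats 1000000

theorem stmt7 (X Y W U V : Polynomial ℝ)
    (hU : U = Polynomial.derivative X * W - X * Polynomial.derivative W)
    (hV : V = Polynomial.derivative Y * W - Y * Polynomial.derivative W)
    (d : ℝ) (hd : 0 < d)
    (t₀ : ℝ) (hW : W.eval t₀ ≠ 0) (hUV : ¬(U.eval t₀ = 0 ∧ V.eval t₀ = 0))
    (𝒳 𝒴 : ℝ → ℝ)
    (h𝒳 : 𝒳 = fun s => X.eval s / W.eval s)
    (h𝒴 : 𝒴 = fun s => Y.eval s / W.eval s)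
    (x₀ y₀ : ℝ)
    (hx₀ : x₀ = 𝒳 t₀ +
      d / Real.sqrt ((deriv 𝒳 t₀) ^ 2 + (deriv 𝒴 t₀) ^ 2) * deriv 𝒴 t₀)
    (hy₀ : y₀ = 𝒴 t₀ -
      d / Real.sqrt ((deriv 𝒳 t₀) ^ 2 + (deriv 𝒴 t₀) ^ 2) * deriv 𝒳 t₀)
    (p : Polynomial ℝ)
    (hp : p = U * (Polynomial.C x₀ * W - X) + V * (Polynomial.C y₀ * W - Y)) :
    (Polynomial.derivative p).eval t₀ = 0 ↔
      (deriv 𝒳 t₀ * deriv (deriv 𝒴) t₀ - deriv (deriv 𝒳) t₀ * deriv 𝒴 t₀) /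
        (Real.sqrt ((deriv 𝒳 t₀) ^ 2 + (deriv 𝒴 t₀) ^ 2)) ^ 3 = -(1 / d) := by
  subst h𝒳 h𝒴
  -- names
  set w : ℝ := W.eval t₀ with hw
  set w1 : ℝ := (derivative W).eval t₀ with hw1
  set w2 : ℝ := (derivative (derivative W)).eval t₀ with hw2
  set x : ℝ := X.eval t₀ with hx
  set x1 : ℝ := (derivative X).eval t₀ with hx1
  set a : ℝ := (derivative (derivative X)).eval t₀ with ha
  set y : ℝ := Y.eval t₀ with hy
  set y1 : ℝ := (derivative Y).eval t₀ with hy1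
  set b : ℝ := (derivative (derivative Y)).eval t₀ with hb
  set u : ℝ := U.eval t₀ with huu
  set v : ℝ := V.eval t₀ with hvv
  have hu : u = x1 * w - x * w1 := by rw [huu, hU]; simp; rfl
  have hv : v = y1 * w - y * w1 := by rw [hvv, hV]; simp; rfl
  have hU' : (derivative U).eval t₀ = a * w - x * w2 := by rw [hU]; simp; ring
  have hV' : (derivative V).eval t₀ = b * w - y * w2 := by rw [hV]; simp; ring
  have huv : 0 < u ^ 2 + v ^ 2 := by
    rcases not_and_or.mp hUV with h | h <;> positivity
  set r : ℝ := Real.sqrt (u ^ 2 + v ^ 2) with hrdef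
  have hr : 0 < r := Real.sqrt_pos.mpr huv
  have hr2 : r ^ 2 = u ^ 2 + v ^ 2 := Real.sq_sqrt huv.le
  -- first derivatives
  have hdX : deriv (fun s => X.eval s / W.eval s) t₀ = u / w ^ 2 := by
    rw [((X.hasDerivAt t₀).fun_div (W.hasDerivAt t₀) hW).deriv, hu]
  have hdY : deriv (fun s => Y.eval s / W.eval s) t₀ = v / w ^ 2 := by
    rw [((Y.hasDerivAt t₀).fun_div (W.hasDerivAt t₀) hW).deriv, hv]
  -- second derivatives
  have hWne : ∀ᶠ s in nhds t₀, W.eval s ≠ 0 := (W.continuousAt).eventually_ne hW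
  have hEqX : deriv (fun s => X.eval s / W.eval s) =ᶠ[nhds t₀]
      fun s => U.eval s / (W ^ 2).eval s := by
    filter_upwards [hWne] with s hs
    rw [((X.hasDerivAt s).fun_div (W.hasDerivAt s) hs).deriv, hU]
    simp
  have hEqY : deriv (fun s => Y.eval s / W.eval s) =ᶠ[nhds t₀]
      fun s => V.eval s / (W ^ 2).eval s := by
    filter_upwards [hWne] with s hs
    rw [((Y.hasDerivAt s).fun_div (W.hasDerivAt s) hs).deriv, hV]
    simp
  have hW2 : (W ^ 2).eval t₀ ≠ 0 := by simpa using pow_ne_zero 2 hW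
  have hddX : deriv (deriv (fun s => X.eval s / W.eval s)) t₀ =
      ((a * w - x * w2) * w ^ 2 - u * (2 * w * w1)) / w ^ 4 := by
    rw [hEqX.deriv_eq, ((U.hasDerivAt t₀).fun_div ((W ^ 2).hasDerivAt t₀) hW2).deriv, hU']
    simp [Polynomial.derivative_pow]
    ring
  have hddY : deriv (deriv (fun s => Y.eval s / W.eval s)) t₀ =
      ((b * w - y * w2) * w ^ 2 - v * (2 * w * w1)) / w ^ 4 := by
    rw [hEqY.deriv_eq, ((V.hasDerivAt t₀).fun_div ((W ^ 2).hasDerivAt t₀) hW2).deriv, hV']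
    simp [Polynomial.derivative_pow]
    ring
  -- sqrt simplification
  have hsq : Real.sqrt ((u / w ^ 2) ^ 2 + (v / w ^ 2) ^ 2) = r / w ^ 2 := by
    rw [show (u / w ^ 2) ^ 2 + (v / w ^ 2) ^ 2 = (u ^ 2 + v ^ 2) / (w ^ 2) ^ 2 by ring,
      Real.sqrt_div huv.le, Real.sqrt_sq (by positivity)]
  -- offsets
  have hx0 : x₀ = x / w + d * v / r := by
    rw [hx₀, hdX, hdY, hsq]
    show x / w + _ = _
    field_simp
  have hy0 : y₀ = y / w - d * u / r := by
    rw [hy₀, hdX, hdY, hsq]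
    show y / w - _ = _
    field_simp
  -- derivative of p at t₀
  have hpd : (derivative p).eval t₀ =
      (a * w - x * w2) * (x₀ * w - x) + u * (x₀ * w1 - x1) +
      (b * w - y * w2) * (y₀ * w - y) + v * (y₀ * w1 - y1) := by
    rw [hp]
    simp only [derivative_add, derivative_mul, derivative_sub, derivative_C, zero_mul,
      add_zero, zero_add, eval_add, eval_mul, eval_sub, eval_C]
    rw [hU', hV']
    ring
  rw [hpd, hdX, hdY, hddX, hddY, hsq]
  set k : ℝ := u * (b * w - y * w2) - v * (a * w - x * w2) with hk
  have key1 : (a * w - x * w2) * (x₀ * w - x) + u * (x₀ * w1 - x1) +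
      (b * w - y * w2) * (y₀ * w - y) + v * (y₀ * w1 - y1) =
      -(d * w / r) * k - r ^ 2 / w := by
    rw [hx0, hy0, hk, hu, hv, hr2]
    field_simp
    rw [hu, hv]
    ring
  have key2 : (u / w ^ 2 * (((b * w - y * w2) * w ^ 2 - v * (2 * w * w1)) / w ^ 4) -
      ((a * w - x * w2) * w ^ 2 - u * (2 * w * w1)) / w ^ 4 * (v / w ^ 2)) / (r / w ^ 2) ^ 3 =
      k * w ^ 2 / r ^ 3 := by
    rw [hk]
    field_simp
    ring
  rw [key1, key2]
  rw [show -(d * w / r) * k - r ^ 2 / w = -(r ^ 2 * d / w) * (k * w ^ 2 / r ^ 3 + 1 / d) by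
    field_simp; ring]
  constructor
  · intro h
    have hc : -(r ^ 2 * d / w) ≠ 0 := by
      simp only [neg_ne_zero, div_ne_zero_iff]
      exact ⟨by positivity, hW⟩
    have := (mul_eq_zero.mp h).resolve_left hc
    linarith
  · intro h
    rw [h]
    ring
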